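/- Given two consecutive jobs where job 2 is executed at speed s₂ > s₁ ≥ 0 (job 1 at speed s₁) and both speeds are feasible swaps (i.e., transferring a small amount of work from the faster to the slower execution preserves feasibility), the total energy ∫ speed^α strictly decreases when the speeds are made closer; formally, for w₁, w₂ > 0, T₁, T₂ > 0 with w₁/T₁ < w₂/T₂, and any ε with 0 < ε < (w₂·T₁ - w₁·T₂)/(T₁ + T₂), we have (w₁+ε)^α/T₁^(α-1) + (w₂-ε)^α/T₂^(α-1) < w₁^α/T₁^(α-1) + w₂^α/T₂^(α-1). -/

import Mathlib

open Set

/-- Secant slopes of a strictly convex function strictly increase over disjoint intervals. -/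
lemma slope_lt_slope_of_lt {s : Set ℝ} {f : ℝ → ℝ} (hf : StrictConvexOn ℝ s f)
    {a b c d : ℝ} (ha : a ∈ s) (hb : b ∈ s) (hc : c ∈ s) (hd : d ∈ s)
    (hab : a < b) (hbc : b ≤ c) (hcd : c < d) :
    (f b - f a) / (b - a) < (f d - f c) / (d - c) := by
  rcases eq_or_lt_of_le hbc with rfl | hbc
  · exact hf.slope_strict_mono_adjacent ha hd hab hcd
  · exact (hf.slope_strict_mono_adjacent ha hc hab hbc).trans
      (hf.slope_strict_mono_adjacent hb hd hbc hcd)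

/-- Strict-convexity exchange: for `α ≥ 2`, workloads `w₁, w₂ > 0` executed in windows of
lengths `T₁, T₂ > 0` with `w₁/T₁ < w₂/T₂`, transferring `ε` work (for any
`0 < ε < (w₂·T₁ - w₁·T₂)/(T₁ + T₂)`) from the faster to the slower execution strictly
decreases the total energy. -/
theorem exchange_work_decreases_energy
    (α w₁ w₂ T₁ T₂ ε : ℝ) (hα : 2 ≤ α)
    (hw₁ : 0 < w₁) (hw₂ : 0 < w₂) (hT₁ : 0 < T₁) (hT₂ : 0 < T₂)
    (hspeed : w₁ / T₁ < w₂ / T₂)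
    (hε₀ : 0 < ε) (hε₁ : ε < (w₂ * T₁ - w₁ * T₂) / (T₁ + T₂)) :
    (w₁ + ε) ^ α / T₁ ^ (α - 1) + (w₂ - ε) ^ α / T₂ ^ (α - 1) <
      w₁ ^ α / T₁ ^ (α - 1) + w₂ ^ α / T₂ ^ (α - 1) := by
  have hTsum : (0:ℝ) < T₁ + T₂ := by linarith
  have hεkey : ε * (T₁ + T₂) < w₂ * T₁ - w₁ * T₂ := (lt_div_iff₀ hTsum).mp hε₁
  set s₁ := w₁ / T₁ with hs₁
  set u₁ := (w₁ + ε) / T₁ with hu₁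
  set u₂ := (w₂ - ε) / T₂ with hu₂
  set s₂ := w₂ / T₂ with hs₂
  have h1 : s₁ < u₁ := by
    rw [hs₁, hu₁]; exact div_lt_div_of_pos_right (by linarith) hT₁
  have h2 : u₁ < u₂ := by
    rw [hu₁, hu₂, div_lt_div_iff₀ hT₁ hT₂]; nlinarith
  have h3 : u₂ < s₂ := by
    rw [hu₂, hs₂]; exact div_lt_div_of_pos_right (by linarith) hT₂
  have hs₁0 : 0 ≤ s₁ := div_nonneg hw₁.le hT₁.le
  have hu₁0 : 0 ≤ u₁ := le_of_lt (lt_of_le_of_lt hs₁0 h1)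
  have hu₂0 : 0 ≤ u₂ := le_of_lt (lt_of_le_of_lt hu₁0 h2)
  have hs₂0 : 0 ≤ s₂ := le_of_lt (lt_of_le_of_lt hu₂0 h3)
  have hconv := strictConvexOn_rpow (lt_of_lt_of_le one_lt_two hα)
  have hslope := slope_lt_slope_of_lt hconv hs₁0 hu₁0 hu₂0 hs₂0 h1 h2.le h3
  -- slope denominators
  have hd1 : u₁ - s₁ = ε / T₁ := by rw [hu₁, hs₁]; field_simp; ring
  have hd2 : s₂ - u₂ = ε / T₂ := by rw [hs₂, hu₂]; field_simp; ring
  rw [hd1, hd2, div_div_eq_mul_div, div_div_eq_mul_div] at hslope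
  have hkey : T₁ * u₁ ^ α + T₂ * u₂ ^ α < T₁ * s₁ ^ α + T₂ * s₂ ^ α := by
    have h := (div_lt_div_iff₀ hε₀ hε₀).mp hslope
    nlinarith [hε₀, hT₁, hT₂]
  -- rewrite energies as T * speed^α
  have hrw : ∀ w T : ℝ, 0 ≤ w → 0 < T → w ^ α / T ^ (α - 1) = T * (w / T) ^ α := by
    intro w T hw hT
    rw [Real.div_rpow hw hT.le, Real.rpow_sub hT, Real.rpow_one]
    field_simp
  rw [hrw (w₁ + ε) T₁ (by linarith) hT₁, hrw (w₂ - ε) T₂ (by nlinarith) hT₂,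
      hrw w₁ T₁ hw₁.le hT₁, hrw w₂ T₂ hw₂.le hT₂]
  exact hkey
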